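/- Let λ > 0 be real, let m be a positive integer with 2mλ ≥ √3. Then the tail sum J_{[m,∞)} = ∑_{j=m}^{∞} v(j,λ) satisfies the two-sided sandwich: v(m,λ) + (m+1)·exp(−2(m+1)²λ²) ≤ J_{[m,∞)} ≤ v(m,λ) + m·exp(−2m²λ²), where v(r,λ) = (4r²λ² − 1)·exp(−2r²λ²). -/

import Mathlib

/-- `v(r,λ) = (4r²λ² - 1)·exp(-2r²λ²)`. -/
noncomputable def v (r l : ℝ) : ℝ := (4 * r ^ 2 * l ^ 2 - 1) * Real.exp (-2 * r ^ 2 * l ^ 2)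

noncomputable def Fv (r l : ℝ) : ℝ := r * Real.exp (-2 * r ^ 2 * l ^ 2)

lemma hasDerivAt_inner (l x : ℝ) :
    HasDerivAt (fun y : ℝ => -2 * y ^ 2 * l ^ 2) (-4 * x * l ^ 2) x := by
  have h := (hasDerivAt_pow 2 x).const_mul (-2 * l ^ 2)
  have he : (fun y : ℝ => -2 * y ^ 2 * l ^ 2) = fun y : ℝ => -2 * l ^ 2 * y ^ 2 := by
    funext y; ring
  rw [he]
  exact h.congr_deriv (by norm_num; ring)

lemma hasDerivAt_negFv (l x : ℝ) :
    HasDerivAt (fun y : ℝ => -Fv y l) (v x l) x := by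
  have h2 := (hasDerivAt_inner l x).exp
  have h3 := ((hasDerivAt_id x).mul h2).neg
  exact h3.congr_deriv (by simp only [v, id_eq]; ring)

lemma hasDerivAt_v (l x : ℝ) :
    HasDerivAt (fun y : ℝ => v y l)
      (4 * x * l ^ 2 * (3 - 4 * x ^ 2 * l ^ 2) * Real.exp (-2 * x ^ 2 * l ^ 2)) x := by
  have h2 := (hasDerivAt_inner l x).exp
  have h3 : HasDerivAt (fun y : ℝ => 4 * y ^ 2 * l ^ 2 - 1) (8 * x * l ^ 2) x := by
    have h := ((hasDerivAt_pow 2 x).const_mul (4 * l ^ 2)).sub_const 1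
    have he : (fun y : ℝ => 4 * y ^ 2 * l ^ 2 - 1) = fun y : ℝ => 4 * l ^ 2 * y ^ 2 - 1 := by
      funext y; ring
    rw [he]
    exact h.congr_deriv (by norm_num; ring)
  have h4 := h3.mul h2
  exact h4.congr_deriv (by ring)

lemma v_cont (l : ℝ) : Continuous (fun y : ℝ => v y l) := by
  simp only [v]
  fun_prop

lemma v_antitoneOn (l a : ℝ) (ha : 0 < a) (h3 : 3 ≤ 4 * a ^ 2 * l ^ 2) :
    AntitoneOn (fun y : ℝ => v y l) (Set.Ici a) := by
  apply antitoneOn_of_deriv_nonpos (convex_Ici a) (v_cont l).continuousOn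
  · intro x _
    exact (hasDerivAt_v l x).differentiableAt.differentiableWithinAt
  · intro x hx
    rw [interior_Ici] at hx
    rw [(hasDerivAt_v l x).deriv]
    have hxa : a < x := hx
    have hexp := (Real.exp_pos (-2 * x ^ 2 * l ^ 2)).le
    have h3x : 3 ≤ 4 * x ^ 2 * l ^ 2 := by nlinarith
    nlinarith [mul_nonneg (mul_nonneg (by nlinarith : (0:ℝ) ≤ 4 * x * l ^ 2) (by nlinarith : (0:ℝ) ≤ 4 * x ^ 2 * l ^ 2 - 3)) hexp]

lemma key (l a : ℝ) (ha : 0 < a) (h3 : 3 ≤ 4 * a ^ 2 * l ^ 2) :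
    v (a + 1) l ≤ Fv a l - Fv (a + 1) l ∧ Fv a l - Fv (a + 1) l ≤ v a l := by
  have hab : a ≤ a + 1 := by linarith
  have hint : ∫ x in a..(a + 1), v x l = -Fv (a + 1) l - -Fv a l :=
    intervalIntegral.integral_eq_sub_of_hasDerivAt
      (fun x _ => hasDerivAt_negFv l x) ((v_cont l).intervalIntegrable a (a + 1))
  have hanti := v_antitoneOn l a ha h3
  have hii : IntervalIntegrable (fun y : ℝ => v y l) MeasureTheory.volume a (a + 1) :=
    (v_cont l).intervalIntegrable a (a + 1)
  constructor
  · have hle : ∀ x ∈ Set.Icc a (a + 1), v (a + 1) l ≤ v x l := fun x hx =>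
      hanti (Set.mem_Ici.2 hx.1) (Set.mem_Ici.2 (by linarith)) hx.2
    have := intervalIntegral.integral_mono_on hab (intervalIntegrable_const (c := v (a+1) l)) hii hle
    rw [hint] at this
    simp only [intervalIntegral.integral_const, smul_eq_mul] at this
    linarith
  · have hle : ∀ x ∈ Set.Icc a (a + 1), v x l ≤ v a l := fun x hx =>
      hanti (Set.mem_Ici.2 le_rfl) (Set.mem_Ici.2 hx.1) hx.1
    have := intervalIntegral.integral_mono_on hab hii (intervalIntegrable_const (c := v a l)) hle
    rw [hint] at this
    simp only [intervalIntegral.integral_const, smul_eq_mul] at this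
    linarith

open Filter in
lemma Fv_tendsto (l c : ℝ) (hl : 0 < l) (hc : 1 ≤ c) :
    Tendsto (fun n : ℕ => Fv (c + n) l) atTop (nhds 0) := by
  have hb : 0 < 2 * l ^ 2 := by positivity
  have htop : Tendsto (fun n : ℕ => c + (n : ℝ)) atTop atTop :=
    tendsto_atTop_add_const_left _ c tendsto_natCast_atTop_atTop
  have hrp := (tendsto_rpow_mul_exp_neg_mul_atTop_nhds_zero 1 (2 * l ^ 2) hb).comp htop
  apply squeeze_zero
  · intro n
    have hx : (0:ℝ) ≤ c + n := by positivity
    exact mul_nonneg hx (Real.exp_pos _).le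
  · intro n
    show Fv (c + n) l ≤ ((c + (n:ℝ)) ^ (1:ℝ) * Real.exp (-(2 * l ^ 2) * (c + n)))
    have hx1 : (1:ℝ) ≤ c + n := by
      have : (0:ℝ) ≤ n := Nat.cast_nonneg n
      linarith
    have hx0 : (0:ℝ) < c + n := by linarith
    rw [Real.rpow_one]
    apply mul_le_mul_of_nonneg_left _ hx0.le
    apply Real.exp_le_exp.2
    nlinarith [mul_nonneg (mul_nonneg hb.le hx0.le) (by linarith : (0:ℝ) ≤ c + n - 1)]
  · exact hrp

/-- Tail sandwich: for `λ > 0` and a positive integer `m` with `2mλ ≥ √3`, the tail sum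
`J_{[m,∞)} = ∑_{j=m}^∞ v(j,λ)` satisfies
`v(m,λ) + (m+1)·exp(-2(m+1)²λ²) ≤ J_{[m,∞)} ≤ v(m,λ) + m·exp(-2m²λ²)`. -/
theorem stmt_17 (l : ℝ) (hl : 0 < l) (m : ℕ) (hm : 0 < m)
    (h : Real.sqrt 3 ≤ 2 * m * l) :
    v m l + ((m : ℝ) + 1) * Real.exp (-2 * ((m : ℝ) + 1) ^ 2 * l ^ 2)
      ≤ (∑' j : ℕ, v ((m : ℝ) + j) l) ∧
    (∑' j : ℕ, v ((m : ℝ) + j) l) ≤ v m l + m * Real.exp (-2 * (m : ℝ) ^ 2 * l ^ 2) := by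
  have hm1 : (1:ℝ) ≤ (m:ℝ) := by exact_mod_cast hm
  have h3 : 3 ≤ 4 * (m:ℝ) ^ 2 * l ^ 2 := by
    have hs : Real.sqrt 3 ^ 2 = 3 := Real.sq_sqrt (by norm_num)
    nlinarith [Real.sqrt_nonneg 3]
  have h3' : ∀ x : ℝ, (m:ℝ) ≤ x → 3 ≤ 4 * x ^ 2 * l ^ 2 := by
    intro x hx
    have hsq : (m:ℝ) ^ 2 ≤ x ^ 2 := by nlinarith
    nlinarith [mul_le_mul_of_nonneg_right hsq (sq_nonneg l)]
  set f : ℕ → ℝ := fun j => v ((m:ℝ) + j) l with hfdef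
  have hpos : ∀ j : ℕ, 0 ≤ f j := by
    intro j
    have h3j : 3 ≤ 4 * ((m:ℝ) + j) ^ 2 * l ^ 2 :=
      h3' _ (le_add_of_nonneg_right (Nat.cast_nonneg j))
    simp only [hfdef, v]
    exact mul_nonneg (by linarith) (Real.exp_pos _).le
  have hmj : ∀ j : ℕ, (0:ℝ) < (m:ℝ) + j := fun j => by
    have := Nat.cast_nonneg (α := ℝ) j; linarith
  have keyU : ∀ j : ℕ, f (j + 1) ≤ Fv ((m:ℝ) + j) l - Fv ((m:ℝ) + j + 1) l := by
    intro j
    have hk := (key l ((m:ℝ) + j) (hmj j)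
      (h3' _ (le_add_of_nonneg_right (Nat.cast_nonneg j)))).1
    have : f (j + 1) = v ((m:ℝ) + j + 1) l := by
      simp only [hfdef]; push_cast; ring_nf
    rw [this]
    exact hk
  have keyL : ∀ j : ℕ, Fv ((m:ℝ) + 1 + j) l - Fv ((m:ℝ) + 1 + j + 1) l ≤ f (j + 1) := by
    intro j
    have hk := (key l ((m:ℝ) + 1 + j) (by have := Nat.cast_nonneg (α := ℝ) j; linarith)
      (h3' _ (by have := Nat.cast_nonneg (α := ℝ) j; linarith))).2
    have : f (j + 1) = v ((m:ℝ) + 1 + j) l := by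
      simp only [hfdef]; push_cast; ring_nf
    rw [this]
    exact hk
  have hFnn : ∀ x : ℝ, 0 ≤ x → 0 ≤ Fv x l := fun x hx =>
    mul_nonneg hx (Real.exp_pos _).le
  have htelU : ∀ n : ℕ, ∑ j ∈ Finset.range n, (Fv ((m:ℝ) + j) l - Fv ((m:ℝ) + j + 1) l)
      = Fv (m:ℝ) l - Fv ((m:ℝ) + n) l := by
    intro n
    have := Finset.sum_range_sub' (fun k : ℕ => Fv ((m:ℝ) + k) l) n
    simpa [Nat.cast_add, Nat.cast_one, add_assoc] using this
  have htelL : ∀ n : ℕ, ∑ j ∈ Finset.range n, (Fv ((m:ℝ) + 1 + j) l - Fv ((m:ℝ) + 1 + j + 1) l)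
      = Fv ((m:ℝ) + 1) l - Fv ((m:ℝ) + 1 + n) l := by
    intro n
    have := Finset.sum_range_sub' (fun k : ℕ => Fv ((m:ℝ) + 1 + k) l) n
    simpa [Nat.cast_add, Nat.cast_one, add_assoc] using this
  have hboundU : ∀ n : ℕ, ∑ j ∈ Finset.range n, f (j + 1) ≤ Fv (m:ℝ) l := by
    intro n
    calc ∑ j ∈ Finset.range n, f (j + 1)
        ≤ ∑ j ∈ Finset.range n, (Fv ((m:ℝ) + j) l - Fv ((m:ℝ) + j + 1) l) :=
          Finset.sum_le_sum fun j _ => keyU j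
      _ = Fv (m:ℝ) l - Fv ((m:ℝ) + n) l := htelU n
      _ ≤ Fv (m:ℝ) l := by
          have := hFnn ((m:ℝ) + n) (hmj n).le; linarith
  have hsum' : Summable (fun j : ℕ => f (j + 1)) :=
    summable_of_sum_range_le (fun n => hpos (n + 1)) hboundU
  have hsum : Summable f := (summable_nat_add_iff 1).1 hsum'
  have hsplit : ∑' j : ℕ, f j = f 0 + ∑' j : ℕ, f (j + 1) := Summable.tsum_eq_zero_add hsum
  have hupper : ∑' j : ℕ, f (j + 1) ≤ Fv (m:ℝ) l :=
    Real.tsum_le_of_sum_range_le (fun n => hpos (n + 1)) hboundU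
  have hlower : Fv ((m:ℝ) + 1) l ≤ ∑' j : ℕ, f (j + 1) := by
    have htends := hsum'.hasSum.tendsto_sum_nat
    have hFt := Fv_tendsto l ((m:ℝ) + 1) hl (by linarith)
    have hct : Filter.Tendsto (fun n : ℕ => Fv ((m:ℝ) + 1) l - Fv ((m:ℝ) + 1 + n) l) Filter.atTop
        (nhds (Fv ((m:ℝ) + 1) l - 0)) := tendsto_const_nhds.sub hFt
    have hle := le_of_tendsto_of_tendsto' hct htends (fun n => by
      rw [← htelL n]
      exact Finset.sum_le_sum fun j _ => keyL j)
    simpa using hle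
  have hf0 : f 0 = v (m:ℝ) l := by simp [hfdef]
  constructor
  · have : ((m:ℝ) + 1) * Real.exp (-2 * ((m:ℝ) + 1) ^ 2 * l ^ 2) = Fv ((m:ℝ) + 1) l := rfl
    rw [this, hsplit, hf0]
    linarith
  · have : (m:ℝ) * Real.exp (-2 * (m:ℝ) ^ 2 * l ^ 2) = Fv (m:ℝ) l := rfl
    rw [this, hsplit, hf0]
    linarith
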